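/- For a positive integer n, let k be the largest integer with k² ∣ n. Then the number of isomorphism classes of indecomposable solutions with n elements, of multipermutational level at most 2, with abelian permutation group, equals ∑_{d ∣ k} k/d = σ(k) (the sum of divisors of k). Equivalently, the number of triples (n₁,n₂,r) with n₁n₂ = n, n₁ ∣ n₂, 0 ≤ r < n₂/n₁ and n₂ ∣ n₁r² equals σ(k). -/

import Mathlib

/-- if `k` is the largest integer with `k² ∣ n`, then the number of
admissible parameter triples `(n₁, n₂, r)` — i.e. of indecomposable solutions with `n`
elements of multipermutational level at most 2 with abelian permutation group — equals
`∑_{d ∣ k} k/d`, the sum of divisors of `k`. -/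
theorem count_solutions (n k : ℕ) (hn : 0 < n) (hk : k ^ 2 ∣ n)
    (hmax : ∀ m : ℕ, m ^ 2 ∣ n → m ≤ k) :
    (((Finset.range (n + 1)) ×ˢ (Finset.range (n + 1)) ×ˢ (Finset.range (n + 1))).filter
        (fun t : ℕ × ℕ × ℕ => t.1 * t.2.1 = n ∧ t.1 ∣ t.2.1 ∧ t.2.2 < t.2.1 / t.1 ∧
          t.2.1 ∣ t.1 * t.2.2 ^ 2)).card = ∑ d ∈ k.divisors, k / d ∧
    (∑ d ∈ k.divisors, k / d) = ∑ d ∈ k.divisors, d := by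
  refine ⟨?_, Nat.sum_div_divisors k id⟩
  have hn0 : n ≠ 0 := hn.ne'
  have hk1 : 1 ≤ k := hmax 1 (by simpa using one_dvd n)
  have hk0 : k ≠ 0 := by omega
  have hle2 : ∀ q, 2 * k.factorization q ≤ n.factorization q := by
    intro q
    have h := (Nat.factorization_le_iff_dvd (pow_ne_zero 2 hk0) hn0).mpr hk
    have h2 := Finsupp.le_def.mp h q
    simpa [Nat.factorization_pow] using h2
  have hfac : ∀ p, k.factorization p = n.factorization p / 2 := by
    intro p
    by_cases hp : p.Prime
    · have h1 := hle2 p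
      have h2 : n.factorization p / 2 ≤ k.factorization p := by
        by_contra hlt
        push_neg at hlt
        have hdvd : (k * p) ^ 2 ∣ n := by
          rw [← Nat.factorization_le_iff_dvd
            (pow_ne_zero 2 (Nat.mul_ne_zero hk0 hp.ne_zero)) hn0]
          rw [Finsupp.le_def]
          intro q
          rw [Nat.factorization_pow, Nat.factorization_mul hk0 hp.ne_zero, hp.factorization]
          simp only [Finsupp.smul_apply, Finsupp.add_apply, Finsupp.single_apply, smul_eq_mul]
          have := hle2 q
          by_cases hq : p = q
          · subst hq; simp only [if_pos rfl, reduceIte]; omega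
          · simp only [if_neg hq]; omega
        have := hmax (k * p) hdvd
        nlinarith [hp.two_le]
      omega
    · rw [Nat.factorization_eq_zero_of_not_prime k hp,
        Nat.factorization_eq_zero_of_not_prime n hp]
  have hkn : k ∣ n := (dvd_pow_self k two_ne_zero).trans hk
  set s := n / k with hs
  have hsk : s * k = n := Nat.div_mul_cancel hkn
  have hs0 : s ≠ 0 := by
    intro h; rw [h] at hsk; simp at hsk; omega
  have hfacs : ∀ p, s.factorization p = n.factorization p - n.factorization p / 2 := by
    intro p
    rw [hs, Nat.factorization_div hkn, Finsupp.tsub_apply, hfac]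
  have hks : k ∣ s := by
    rw [← Nat.factorization_le_iff_dvd hk0 hs0, Finsupp.le_def]
    intro q; rw [hfacs, hfac]; omega
  have hdvdk : ∀ m, m ^ 2 ∣ n → m ∣ k := by
    intro m hm
    have hm0 : m ≠ 0 := by rintro rfl; simp at hm; omega
    rw [← Nat.factorization_le_iff_dvd hm0 hk0, Finsupp.le_def]
    intro q
    have h := (Nat.factorization_le_iff_dvd (pow_ne_zero 2 hm0) hn0).mpr hm
    have h2 := Finsupp.le_def.mp h q
    simp only [Nat.factorization_pow, Finsupp.smul_apply, smul_eq_mul] at h2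
    rw [hfac]; omega
  have hds : ∀ d, d ∣ k → d ∣ s := by
    intro d hd
    have hd0 : d ≠ 0 := by rintro rfl; exact hk0 (Nat.eq_zero_of_zero_dvd hd)
    rw [← Nat.factorization_le_iff_dvd hd0 hs0, Finsupp.le_def]
    intro q
    have := Finsupp.le_def.mp ((Nat.factorization_le_iff_dvd hd0 hk0).mpr hd) q
    rw [hfacs]; rw [hfac] at this; omega
  have hkey : ∀ x, n ∣ x ^ 2 → s ∣ x := by
    intro x hx
    rcases Nat.eq_zero_or_pos x with rfl | hx0
    · exact dvd_zero s
    rw [← Nat.factorization_le_iff_dvd hs0 hx0.ne', Finsupp.le_def]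
    intro q
    have h := (Nat.factorization_le_iff_dvd hn0 (pow_ne_zero 2 hx0.ne')).mpr hx
    have h2 := Finsupp.le_def.mp h q
    simp only [Nat.factorization_pow, Finsupp.smul_apply, smul_eq_mul] at h2
    rw [hfacs]; omega
  -- the combinatorial part
  have hset : (((Finset.range (n + 1)) ×ˢ (Finset.range (n + 1)) ×ˢ (Finset.range (n + 1))).filter
        (fun t : ℕ × ℕ × ℕ => t.1 * t.2.1 = n ∧ t.1 ∣ t.2.1 ∧ t.2.2 < t.2.1 / t.1 ∧
          t.2.1 ∣ t.1 * t.2.2 ^ 2))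
      = k.divisors.biUnion
        (fun d => (Finset.range (k / d)).image (fun j => (d, n / d, j * (s / d)))) := by
    ext ⟨d, e, r⟩
    simp only [Finset.mem_filter, Finset.mem_product, Finset.mem_range, Finset.mem_biUnion,
      Finset.mem_image, Nat.mem_divisors, Prod.mk.injEq]
    constructor
    · rintro ⟨⟨hd, he, hr⟩, hde, hdvde, hrlt, hdiv⟩
      have hd0 : d ≠ 0 := by rintro rfl; simp at hde; omega
      have he0 : e ≠ 0 := by rintro rfl; simp at hde; omega
      have hdpos : 0 < d := Nat.pos_of_ne_zero hd0
      have hen : e = n / d := by rw [← hde, Nat.mul_div_cancel_left e hdpos]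
      have hd2 : d ^ 2 ∣ n := by
        rw [← hde, pow_two]; exact mul_dvd_mul_left d hdvde
      have hdk : d ∣ k := hdvdk d hd2
      have hdsd : d ∣ s := hds d hdk
      have htd : d * (s / d) = s := Nat.mul_div_cancel' hdsd
      have htd0 : s / d ≠ 0 := by
        intro h; rw [h] at htd; simp at htd; exact hs0 htd.symm
      have hn_dvd : n ∣ (d * r) ^ 2 := by
        have h1 : e * d ∣ (d * r ^ 2) * d := mul_dvd_mul_right hdiv d
        have h2 : e * d = n := by rw [mul_comm]; exact hde
        have h3 : (d * r ^ 2) * d = (d * r) ^ 2 := by ring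
        rwa [h2, h3] at h1
      have hsr : s ∣ d * r := hkey _ hn_dvd
      have htr : s / d ∣ r := by
        rw [← htd] at hsr
        exact (mul_dvd_mul_iff_left hd0).mp hsr
      obtain ⟨j, hj⟩ := htr
      have hkd : d * (k / d) = k := Nat.mul_div_cancel' hdk
      have hnd2 : e / d = (s / d) * (k / d) := by
        have hnn : n = ((s / d) * (k / d)) * (d * d) := by
          rw [← hsk]; nth_rewrite 1 [← htd, ← hkd]; ring
        rw [hen, Nat.div_div_eq_div_mul, hnn,
          Nat.mul_div_cancel _ (by positivity)]
      rw [hnd2, hj] at hrlt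
      have hjlt : j < k / d := by
        by_contra hc
        push_neg at hc
        have : (s / d) * (k / d) ≤ s / d * j :=
          Nat.mul_le_mul_left _ hc
        omega
      exact ⟨d, ⟨hdk, hk0⟩, j, hjlt, rfl, hen.symm, by rw [hj]; ring⟩
    · rintro ⟨d, ⟨hdk, -⟩, j, hj, rfl, rfl, rfl⟩
      have hd0 : d ≠ 0 := by rintro rfl; exact hk0 (Nat.eq_zero_of_zero_dvd hdk)
      have hdpos : 0 < d := Nat.pos_of_ne_zero hd0
      have hdn : d ∣ n := hdk.trans hkn
      have hdsd : d ∣ s := hds d hdk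
      have htd : d * (s / d) = s := Nat.mul_div_cancel' hdsd
      have htd0 : 0 < s / d := Nat.div_pos (Nat.le_of_dvd (Nat.pos_of_ne_zero hs0) hdsd) hdpos
      have hkd : d * (k / d) = k := Nat.mul_div_cancel' hdk
      have hde : d * (n / d) = n := Nat.mul_div_cancel' hdn
      have hnd : n / d = (s / d) * k := by
        have hnn : n = d * ((s / d) * k) := by rw [← hsk]; nth_rewrite 1 [← htd]; ring
        rw [hnn, Nat.mul_div_cancel_left _ hdpos]
      have hnd2 : (n / d) / d = (s / d) * (k / d) := by
        have hnn : n = ((s / d) * (k / d)) * (d * d) := by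
          rw [← hsk]; nth_rewrite 1 [← htd, ← hkd]; ring
        rw [Nat.div_div_eq_div_mul, hnn, Nat.mul_div_cancel _ (by positivity)]
      have hrlt : j * (s / d) < (n / d) / d := by
        rw [hnd2, mul_comm (s / d) (k / d)]
        exact Nat.mul_lt_mul_of_lt_of_le hj (le_refl _) htd0
      refine ⟨⟨?_, ?_, ?_⟩, hde, ?_, hrlt, ?_⟩
      · exact Nat.lt_succ_of_le (Nat.le_of_dvd hn hdn)
      · exact Nat.lt_succ_of_le (Nat.div_le_self n d)
      · have h1 : (n / d) / d ≤ n := (Nat.div_le_self _ _).trans (Nat.div_le_self _ _)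
        omega
      · -- d ∣ n / d
        rw [hnd]; exact hdk.mul_left _
      · -- n / d ∣ d * (j * (s / d)) ^ 2
        obtain ⟨c, hc⟩ := hks
        rw [hnd]
        refine ⟨c * j ^ 2, ?_⟩
        set td := s / d with htddef
        calc d * (j * td) ^ 2 = (d * td) * (td * j ^ 2) := by ring
          _ = s * (td * j ^ 2) := by rw [htd]
          _ = (k * c) * (td * j ^ 2) := by rw [← hc]
          _ = td * k * (c * j ^ 2) := by ring
  rw [hset, Finset.card_biUnion]
  · apply Finset.sum_congr rfl
    intro d hd
    have hdk := (Nat.mem_divisors.mp hd).1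
    have hdpos := Nat.pos_of_mem_divisors hd
    have hdsd : d ∣ s := hds d hdk
    have htd0 : 0 < s / d := Nat.div_pos (Nat.le_of_dvd (Nat.pos_of_ne_zero hs0) hdsd) hdpos
    rw [Finset.card_image_of_injective _ ?_, Finset.card_range]
    intro a b hab
    simp only [Prod.mk.injEq] at hab
    exact Nat.eq_of_mul_eq_mul_right htd0 hab.2.2
  · intro x hx y hy hxy
    rw [Function.onFun, Finset.disjoint_left]
    rintro ⟨a, b, c⟩ ha hb
    simp only [Finset.mem_image, Finset.mem_range, Prod.mk.injEq] at ha hb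
    obtain ⟨_, _, h1, -, -⟩ := ha
    obtain ⟨_, _, h2, -, -⟩ := hb
    exact hxy (h1.trans h2.symm)
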